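/- A prime p can be written as p = a² + 3b² with integers a, b if and only if p = 3 or p ≡ 1 (mod 6). -/

import Mathlib

/-- If `p ≡ 1 mod 6` is prime, then `-3` is a square mod `p`. -/
lemma aux_sqrt_neg_three (p : ℕ) (hp : p.Prime) (h6 : p % 6 = 1) :
    ∃ c : ℤ, (p : ℤ) ∣ c ^ 2 + 3 := by
  haveI : Fact p.Prime := ⟨hp⟩
  have hp2 : 2 ≤ p := hp.two_le
  have hp7 : 7 ≤ p := by omega
  obtain ⟨g, hg⟩ := IsCyclic.exists_generator (α := (ZMod p)ˣ)
  have hog : orderOf g = p - 1 := by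
    rw [orderOf_eq_card_of_forall_mem_zpowers hg, Nat.card_eq_fintype_card,
      ZMod.card_units_eq_totient, Nat.totient_prime hp]
  set k := (p - 1) / 3 with hkdef
  have hk : p - 1 = 3 * k := by omega
  have hkpos : 0 < k := by omega
  have hω : orderOf (g ^ k) = 3 := by
    rw [orderOf_pow, hog, hk, Nat.gcd_eq_right (dvd_mul_left k 3),
      Nat.mul_div_cancel _ hkpos]
  have hω3 : (g ^ k) ^ 3 = 1 := by rw [← hω]; exact pow_orderOf_eq_one _
  have hω1 : (g ^ k) ≠ 1 := by
    intro h; rw [h, orderOf_one] at hω; omega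
  set w : ZMod p := ((g ^ k : (ZMod p)ˣ) : ZMod p) with hwdef
  have hw3 : w ^ 3 = 1 := by
    have := congrArg (Units.val) hω3
    push_cast at this
    exact this
  have hw1 : w ≠ 1 := fun h => hω1 (Units.ext h)
  have hsum : w ^ 2 + w + 1 = 0 := by
    have hfac : (w - 1) * (w ^ 2 + w + 1) = 0 := by linear_combination hw3
    rcases mul_eq_zero.mp hfac with h | h
    · exact absurd (sub_eq_zero.mp h) hw1
    · exact h
  set z : ZMod p := 2 * w + 1 with hzdef
  have hz : z ^ 2 = -3 := by simp only [hzdef]; linear_combination 4 * hsum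
  refine ⟨(z.val : ℤ), (ZMod.intCast_zmod_eq_zero_iff_dvd _ p).mp ?_⟩
  push_cast
  rw [ZMod.natCast_val, ZMod.cast_id, hz]
  ring

theorem stmt_2 (p : ℕ) (hp : p.Prime) :
    (∃ a b : ℤ, (p : ℤ) = a ^ 2 + 3 * b ^ 2) ↔
    (p = 3 ∨ p % 6 = 1) := by
  constructor
  · rintro ⟨a, b, h⟩
    -- mod 3
    have h3 : (p : ZMod 3) = (a : ZMod 3) ^ 2 := by
      have := congrArg (Int.cast : ℤ → ZMod 3) h
      push_cast at this
      rw [this]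
      have h30 : (3 : ZMod 3) = 0 := by decide
      rw [h30]; ring
    have hsq3 : ∀ t : ZMod 3, t ^ 2 = 0 ∨ t ^ 2 = 1 := by decide
    rcases hsq3 (a : ZMod 3) with ha | ha
    · left
      have hdvd : (3 : ℕ) ∣ p :=
        (ZMod.natCast_eq_zero_iff p 3).mp (h3.trans ha)
      exact ((Nat.prime_dvd_prime_iff_eq (by norm_num) hp).mp hdvd).symm
    · right
      have hmod3 : p % 3 = 1 := by
        have := ZMod.val_natCast (n := 3) p
        rw [h3, ha] at this
        exact this.symm.trans (show ZMod.val (1 : ZMod 3) = 1 by decide)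
      have h4 : (p : ZMod 4) = (a : ZMod 4) ^ 2 + 3 * (b : ZMod 4) ^ 2 := by
        have := congrArg (Int.cast : ℤ → ZMod 4) h
        push_cast at this
        exact this
      have hne2 : p ≠ 2 := by
        intro hp2
        rw [hp2] at h4
        have : ∀ s t : ZMod 4, s ^ 2 + 3 * t ^ 2 ≠ 2 := by decide
        exact this _ _ h4.symm
      have hodd : p % 2 = 1 := Nat.odd_iff.mp (hp.odd_of_ne_two hne2)
      omega
  · rintro (rfl | h6)
    · exact ⟨0, 1, by norm_num⟩
    haveI : Fact p.Prime := ⟨hp⟩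
    have hp2 : 2 ≤ p := hp.two_le
    have hp7 : 7 ≤ p := by omega
    obtain ⟨c, hc⟩ := aux_sqrt_neg_three p hp h6
    set n := Nat.sqrt p with hndef
    have hn2 : n * n < p := by
      have hle : n * n ≤ p := Nat.sqrt_le p
      rcases lt_or_eq_of_le hle with h | h
      · exact h
      · exfalso
        have hdvd : n ∣ p := ⟨n, h.symm⟩
        rcases Nat.Prime.eq_one_or_self_of_dvd hp n hdvd with h1 | h1 <;>
          rw [h1] at h
        · omega
        · nlinarith
    -- Thue's lemma via pigeonhole
    obtain ⟨x, y, hd1, hxb, hyb, hxy0⟩ :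
        ∃ x y : ℤ, (p : ℤ) ∣ x - c * y ∧ x ^ 2 ≤ (n : ℤ) * n ∧
          y ^ 2 ≤ (n : ℤ) * n ∧ ¬(x = 0 ∧ y = 0) := by
      have hcard : (Finset.univ : Finset (ZMod p)).card <
          ((Finset.range (n + 1)) ×ˢ (Finset.range (n + 1))).card := by
        rw [Finset.card_univ, ZMod.card, Finset.card_product, Finset.card_range]
        have := Nat.lt_succ_sqrt p
        nlinarith
      obtain ⟨⟨x1, y1⟩, hm1, ⟨x2, y2⟩, hm2, hne, heq⟩ :=
        Finset.exists_ne_map_eq_of_card_lt_of_maps_to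
          (t := (Finset.univ : Finset (ZMod p)))
          hcard
          (f := fun q : ℕ × ℕ => (q.1 : ZMod p) - (c : ZMod p) * q.2)
          (fun a _ => Finset.mem_univ _)
      simp only [Finset.mem_product, Finset.mem_range, Nat.lt_succ_iff] at hm1 hm2
      simp only at heq
      refine ⟨(x1 : ℤ) - x2, (y1 : ℤ) - y2, ?_, ?_, ?_, ?_⟩
      · apply (ZMod.intCast_zmod_eq_zero_iff_dvd _ p).mp
        push_cast
        linear_combination heq
      · have h1 : (x1 : ℤ) ≤ n := by exact_mod_cast hm1.1
        have h2 : (x2 : ℤ) ≤ n := by exact_mod_cast hm2.1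
        have h3 : (0 : ℤ) ≤ x1 := Int.natCast_nonneg _
        have h4 : (0 : ℤ) ≤ x2 := Int.natCast_nonneg _
        nlinarith
      · have h1 : (y1 : ℤ) ≤ n := by exact_mod_cast hm1.2
        have h2 : (y2 : ℤ) ≤ n := by exact_mod_cast hm2.2
        have h3 : (0 : ℤ) ≤ y1 := Int.natCast_nonneg _
        have h4 : (0 : ℤ) ≤ y2 := Int.natCast_nonneg _
        nlinarith
      · rintro ⟨hx0, hy0⟩
        apply hne
        have hx : x1 = x2 := by omega
        have hy : y1 = y2 := by omega
        rw [hx, hy]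
    have hd : (p : ℤ) ∣ x ^ 2 + 3 * y ^ 2 := by
      have hexp : x ^ 2 + 3 * y ^ 2 = (x - c * y) * (x + c * y) + (c ^ 2 + 3) * y ^ 2 := by
        ring
      rw [hexp]
      exact dvd_add (hd1.mul_right _) (hc.mul_right _)
    have hnp : ((n : ℤ) * n) < p := by exact_mod_cast hn2
    have hpos : 0 < x ^ 2 + 3 * y ^ 2 := by
      rcases eq_or_ne x 0 with hx0 | hx0
      · have hy0 : y ≠ 0 := fun hy0 => hxy0 ⟨hx0, hy0⟩
        positivity
      · positivity
    obtain ⟨m, hm⟩ := hd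
    have hm0 : 0 < m := by nlinarith
    have hm4 : m < 4 := by nlinarith
    have hodd : (p : ℤ) % 2 = 1 := by
      have : p % 2 = 1 := by omega
      omega
    interval_cases m
    · exact ⟨x, y, by linarith⟩
    · -- x^2 + 3 y^2 = 2p : impossible by parity
      exfalso
      rcases Int.even_or_odd x with ⟨u, hu⟩ | ⟨u, hu⟩ <;>
        rcases Int.even_or_odd y with ⟨v, hv⟩ | ⟨v, hv⟩ <;>
        rw [hu, hv] at hm
      · have h2 : 4 * u ^ 2 + 12 * v ^ 2 = 2 * (p : ℤ) := by linear_combination hm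
        generalize u ^ 2 = U at h2
        generalize v ^ 2 = V at h2
        omega
      · have h2 : 4 * u ^ 2 + 12 * v ^ 2 + 12 * v + 3 = 2 * (p : ℤ) := by
          linear_combination hm
        generalize u ^ 2 = U at h2
        generalize v ^ 2 = V at h2
        omega
      · have h2 : 4 * u ^ 2 + 4 * u + 1 + 12 * v ^ 2 = 2 * (p : ℤ) := by
          linear_combination hm
        generalize u ^ 2 = U at h2
        generalize v ^ 2 = V at h2
        omega
      · have h2 : 4 * u ^ 2 + 4 * u + 12 * v ^ 2 + 12 * v + 4 = 2 * (p : ℤ) := by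
          linear_combination hm
        generalize u ^ 2 = U at h2
        generalize v ^ 2 = V at h2
        omega
    · -- x^2 + 3 y^2 = 3p : then 3 ∣ x and p = y^2 + 3 z^2
      have h3x : (3 : ℤ) ∣ x := by
        have hsq : (3 : ℤ) ∣ x ^ 2 := ⟨(p : ℤ) - y ^ 2, by linarith⟩
        exact Int.prime_three.dvd_of_dvd_pow hsq
      obtain ⟨z, hz⟩ := h3x
      have hx2 : x ^ 2 = 9 * z ^ 2 := by rw [hz]; ring
      exact ⟨y, z, by linarith⟩
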